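/- There are precisely seven model structures on the category of pointed sets: a triple (C, F, W) of classes of pointed maps is a model structure if and only if it equals one of: (1) (any, any, bij); (2) (any, bij, any); (3) (bij, any, any); (4) (inj, surj, any); (5) (surj, inj, any); (6) (surj ∩ inj_{≠⋆}, inj_⋆, any); (7) (inj_{≠⋆}, surj ∩ inj_⋆, any), where 'any' denotes all pointed maps. -/
import Mathlib

universe u

open CategoryTheory

/-- Weak factorization system. -/
def IsWFS {C : Type*} [Category C] (L R : MorphismProperty C) : Prop :=
  (∀ {A B : C} (f : A ⟶ B), ∃ (E : C) (l : A ⟶ E) (r : E ⟶ B), L l ∧ R r ∧ l ≫ r = f) ∧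
    (∀ {A B : C} (l : A ⟶ B), L l ↔ ∀ {X Y : C} (r : X ⟶ Y), R r → HasLiftingProperty l r) ∧
    (∀ {X Y : C} (r : X ⟶ Y), R r ↔ ∀ {A B : C} (l : A ⟶ B), L l → HasLiftingProperty l r)

/-- The 2-out-of-3 property for a class of morphisms. -/
def TwoOutOfThree {C : Type*} [Category C] (W : MorphismProperty C) : Prop :=
  ∀ {A B D : C} (f : A ⟶ B) (g : B ⟶ D),
    (W f → W g → W (f ≫ g)) ∧ (W f → W (f ≫ g) → W g) ∧ (W g → W (f ≫ g) → W f)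

/-- The intersection of two classes of morphisms. -/
def interMP {C : Type*} [Category C] (P Q : MorphismProperty C) : MorphismProperty C :=
  fun _ _ f => P f ∧ Q f

/-- A model structure. -/
def IsModelStructure {𝒞 : Type*} [Category 𝒞] (C F W : MorphismProperty 𝒞) : Prop :=
  TwoOutOfThree W ∧ IsWFS (interMP C W) F ∧ IsWFS C (interMP F W)

/-- Pointed maps whose underlying function is bijective. -/
def pBij : MorphismProperty Pointed.{u} := fun _ _ f => Function.Bijective f.toFun

/-- Pointed maps whose underlying function is injective. -/
def pInj : MorphismProperty Pointed.{u} := fun _ _ f => Function.Injective f.toFun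

/-- Pointed maps whose underlying function is surjective. -/
def pSurj : MorphismProperty Pointed.{u} := fun _ _ f => Function.Surjective f.toFun

/-- All pointed maps. -/
def pAny : MorphismProperty Pointed.{u} := fun _ _ _ => True

/-- Pointed maps `f : (A, a) → (B, b)` such that the preimage of the basepoint `b`
is exactly `{a}`. -/
def pInjStar : MorphismProperty Pointed.{u} :=
  fun X Y f => ∀ a : X, f.toFun a = Y.point → a = X.point

/-- Pointed maps `f : (A, a) → (B, b)` that are injective on the complement of the
preimage of the basepoint `b`. -/
def pInjNeStar : MorphismProperty Pointed.{u} :=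
  fun _ Y f => ∀ a a', f.toFun a ≠ Y.point → f.toFun a' ≠ Y.point →
    f.toFun a = f.toFun a' → a = a'

section Infra

lemma hom_congr {A B : Pointed.{u}} {f g : A ⟶ B} (h : f = g) (x : A) :
    f.toFun x = g.toFun x := by rw [h]

lemma mkHLP {A B X Y : Pointed.{u}} {i : A ⟶ B} {p : X ⟶ Y}
    (H : ∀ (f : A ⟶ X) (g : B ⟶ Y), f ≫ p = i ≫ g →
      ∃ d : B ⟶ X, i ≫ d = f ∧ d ≫ p = g) : HasLiftingProperty i p :=
  ⟨fun {f g} sq =>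
    ⟨⟨⟨(H f g sq.w).choose, (H f g sq.w).choose_spec.1, (H f g sq.w).choose_spec.2⟩⟩⟩⟩

lemma useHLP {A B X Y : Pointed.{u}} {i : A ⟶ B} {p : X ⟶ Y} (h : HasLiftingProperty i p)
    (f : A ⟶ X) (g : B ⟶ Y) (w : f ≫ p = i ≫ g) :
    ∃ d : B ⟶ X, i ≫ d = f ∧ d ≫ p = g := by
  have sq : CommSq f i p g := ⟨w⟩
  haveI := h
  exact ⟨sq.lift, sq.fac_left, sq.fac_right⟩

lemma isIso_of_bij {A B : Pointed.{u}} {f : A ⟶ B} (h : Function.Bijective f.toFun) :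
    IsIso f := by
  have : f = (Pointed.Iso.mk (Equiv.ofBijective f.toFun h) f.map_point).hom :=
    Pointed.Hom.ext rfl
  rw [this]; infer_instance

lemma hlp_bij_left {A B X Y : Pointed.{u}} {i : A ⟶ B} (p : X ⟶ Y)
    (h : Function.Bijective i.toFun) : HasLiftingProperty i p := by
  haveI := isIso_of_bij h; infer_instance

lemma hlp_bij_right {A B X Y : Pointed.{u}} (i : A ⟶ B) {p : X ⟶ Y}
    (h : Function.Bijective p.toFun) : HasLiftingProperty i p := by
  haveI := isIso_of_bij h; infer_instance

/-- injections lift against surjections -/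
lemma hlp_inj_surj {A B X Y : Pointed.{u}} {i : A ⟶ B} {p : X ⟶ Y}
    (hi : Function.Injective i.toFun) (hp : Function.Surjective p.toFun) :
    HasLiftingProperty i p := by
  classical
  apply mkHLP
  intro f g w
  have wp : ∀ a, p.toFun (f.toFun a) = g.toFun (i.toFun a) := fun a => hom_congr w a
  refine ⟨⟨fun b => if h : ∃ a, i.toFun a = b then f.toFun h.choose else (hp (g.toFun b)).choose,
      ?_⟩, ?_, ?_⟩
  · have h : ∃ a, i.toFun a = B.point := ⟨A.point, i.map_point⟩
    beta_reduce
    rw [dif_pos h]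
    have : h.choose = A.point := hi (h.choose_spec.trans i.map_point.symm)
    rw [this, f.map_point]
  · apply Pointed.Hom.ext; funext a
    have h : ∃ a', i.toFun a' = i.toFun a := ⟨a, rfl⟩
    show (if h : ∃ a', i.toFun a' = i.toFun a then f.toFun h.choose else _) = f.toFun a
    rw [dif_pos h]
    exact congrArg f.toFun (hi h.choose_spec)
  · apply Pointed.Hom.ext; funext b
    show p.toFun (if h : ∃ a, i.toFun a = b then f.toFun h.choose else _) = g.toFun b
    by_cases h : ∃ a, i.toFun a = b
    · rw [dif_pos h, wp h.choose, h.choose_spec]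
    · rw [dif_neg h]; exact (hp (g.toFun b)).choose_spec

/-- surjections lift against injections -/
lemma hlp_surj_inj {A B X Y : Pointed.{u}} {i : A ⟶ B} {p : X ⟶ Y}
    (hi : Function.Surjective i.toFun) (hp : Function.Injective p.toFun) :
    HasLiftingProperty i p := by
  classical
  apply mkHLP
  intro f g w
  have wp : ∀ a, p.toFun (f.toFun a) = g.toFun (i.toFun a) := fun a => hom_congr w a
  have key : ∀ b, p.toFun (f.toFun (hi b).choose) = g.toFun b := fun b => by
    rw [wp, (hi b).choose_spec]
  refine ⟨⟨fun b => f.toFun (hi b).choose, ?_⟩, ?_, ?_⟩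
  · apply hp
    rw [key, g.map_point, p.map_point]
  · apply Pointed.Hom.ext; funext a
    show f.toFun (hi (i.toFun a)).choose = f.toFun a
    apply hp
    rw [key, wp]
  · apply Pointed.Hom.ext; funext b
    exact key b

/-- surjective+injNeStar lift against injStar -/
lemma hlp_sine_istar {A B X Y : Pointed.{u}} {i : A ⟶ B} {p : X ⟶ Y}
    (his : Function.Surjective i.toFun) (hine : pInjNeStar i) (hp : pInjStar p) :
    HasLiftingProperty i p := by
  classical
  apply mkHLP
  intro f g w
  have wp : ∀ a, p.toFun (f.toFun a) = g.toFun (i.toFun a) := fun a => hom_congr w a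
  have key : ∀ b, p.toFun (f.toFun (his b).choose) = g.toFun b := fun b => by
    rw [wp, (his b).choose_spec]
  have cong : ∀ a a', i.toFun a = i.toFun a' → f.toFun a = f.toFun a' := by
    intro a a' h
    by_cases hb : i.toFun a = B.point
    · have h1 : f.toFun a = X.point := hp _ (by rw [wp, hb, g.map_point])
      have h2 : f.toFun a' = X.point := hp _ (by rw [wp, ← h, hb, g.map_point])
      rw [h1, h2]
    · exact congrArg f.toFun (hine a a' hb (h ▸ hb) h)
  refine ⟨⟨fun b => f.toFun (his b).choose, ?_⟩, ?_, ?_⟩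
  · have := cong (his B.point).choose A.point (by rw [(his B.point).choose_spec, i.map_point])
    exact this.trans f.map_point
  · apply Pointed.Hom.ext; funext a
    exact cong _ _ (his (i.toFun a)).choose_spec
  · apply Pointed.Hom.ext; funext b
    exact key b

/-- injNeStar lift against surjective+injStar -/
lemma hlp_ine_sistar {A B X Y : Pointed.{u}} {i : A ⟶ B} {p : X ⟶ Y}
    (hi : pInjNeStar i) (hps : Function.Surjective p.toFun) (hp : pInjStar p) :
    HasLiftingProperty i p := by
  classical
  apply mkHLP
  intro f g w
  have wp : ∀ a, p.toFun (f.toFun a) = g.toFun (i.toFun a) := fun a => hom_congr w a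
  refine ⟨⟨fun b =>
      if hg : g.toFun b = Y.point then X.point
      else if h : ∃ a, i.toFun a = b then f.toFun h.choose else (hps (g.toFun b)).choose,
      ?_⟩, ?_, ?_⟩
  · beta_reduce
    rw [dif_pos g.map_point]
  · apply Pointed.Hom.ext; funext a
    show (if hg : g.toFun (i.toFun a) = Y.point then X.point else _) = f.toFun a
    by_cases hg : g.toFun (i.toFun a) = Y.point
    · rw [dif_pos hg]
      exact (hp _ (by rw [wp, hg])).symm
    · rw [dif_neg hg]
      have h : ∃ a', i.toFun a' = i.toFun a := ⟨a, rfl⟩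
      rw [dif_pos h]
      have hia : i.toFun a ≠ B.point := fun hc => hg (by rw [hc, g.map_point])
      exact congrArg f.toFun (hi _ _ (h.choose_spec.symm ▸ hia) hia h.choose_spec)
  · apply Pointed.Hom.ext; funext b
    show p.toFun (if hg : g.toFun b = Y.point then X.point else _) = g.toFun b
    by_cases hg : g.toFun b = Y.point
    · rw [dif_pos hg, p.map_point, hg]
    · rw [dif_neg hg]
      by_cases h : ∃ a, i.toFun a = b
      · rw [dif_pos h, wp, h.choose_spec]
      · rw [dif_neg h]
        exact (hps (g.toFun b)).choose_spec

end Infra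
section Generators

/-- one-point pointed set -/
def P1 : Pointed.{u} := ⟨PUnit, PUnit.unit⟩
/-- two-point pointed set -/
def P2 : Pointed.{u} := ⟨Option PUnit, none⟩
/-- three-point pointed set -/
def P3 : Pointed.{u} := ⟨Option (ULift Bool), none⟩

/-- the non-basepoint of `P2` -/
def b1 : P2.{u}.X := some PUnit.unit
/-- non-basepoint elements of `P3` -/
def c1 : P3.{u}.X := some (ULift.up false)
def c2 : P3.{u}.X := some (ULift.up true)

def eMap : P1.{u} ⟶ P2.{u} := ⟨fun _ => none, rfl⟩
def pMap : P2.{u} ⟶ P1.{u} := ⟨fun _ => PUnit.unit, rfl⟩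
def mMap : P3.{u} ⟶ P2.{u} := ⟨Option.map (fun _ => PUnit.unit), rfl⟩

lemma b1_ne : b1.{u} ≠ P2.point := by simp [b1, P2]
lemma c1_ne : c1.{u} ≠ P3.point := by simp [c1, P3]
lemma c2_ne : c2.{u} ≠ P3.point := by simp [c2, P3]
lemma c1_ne_c2 : c1.{u} ≠ c2 := by
  intro h
  have := congrArg ULift.down (Option.some_injective _ h)
  simp at this

lemma P1_all (x : P1.{u}.X) : x = P1.point := rfl

lemma P2cases (z : P2.{u}.X) : z = P2.point ∨ z = b1 := by
  rcases z with _ | z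
  · exact Or.inl rfl
  · exact Or.inr rfl

lemma P3cases (z : P3.{u}.X) : z = P3.point ∨ z = c1 ∨ z = c2 := by
  rcases z with _ | ⟨_ | _⟩
  · exact Or.inl rfl
  · exact Or.inr (Or.inl rfl)
  · exact Or.inr (Or.inr rfl)

lemma mMap_c1 : mMap.{u}.toFun c1 = b1 := rfl
lemma mMap_c2 : mMap.{u}.toFun c2 = b1 := rfl

lemma eMap_inj : Function.Injective eMap.{u}.toFun := fun _ _ _ => rfl

lemma eMap_not_surj : ¬ Function.Surjective eMap.{u}.toFun := by
  intro h
  obtain ⟨a, ha⟩ := h b1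
  exact b1_ne ha.symm

lemma eMap_istar : pInjStar eMap.{u} := fun _ _ => rfl

lemma eMap_ine : pInjNeStar eMap.{u} := fun _ _ _ _ _ => rfl

lemma pMap_surj : Function.Surjective pMap.{u}.toFun := fun b => ⟨none, rfl⟩

lemma pMap_ine : pInjNeStar pMap.{u} := fun a a' h _ _ => absurd rfl h

lemma pMap_not_istar : ¬ pInjStar pMap.{u} := fun h => b1_ne (h b1 rfl)

lemma pMap_not_inj : ¬ Function.Injective pMap.{u}.toFun :=
  fun h => b1_ne (h (show pMap.toFun b1 = pMap.toFun P2.point from rfl))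

lemma mMap_surj : Function.Surjective mMap.{u}.toFun := by
  intro b
  rcases P2cases b with hb | hb
  · exact ⟨P3.point, by rw [hb]; rfl⟩
  · exact ⟨c1, by rw [hb]; rfl⟩

lemma mMap_istar : pInjStar mMap.{u} := by
  intro a ha
  rcases P3cases a with h | h | h
  · exact h
  · rw [h] at ha; exact absurd ha b1_ne
  · rw [h] at ha; exact absurd ha b1_ne

lemma mMap_not_inj : ¬ Function.Injective mMap.{u}.toFun :=
  fun h => c1_ne_c2 (h (mMap_c1.trans mMap_c2.symm))

lemma mMap_not_ine : ¬ pInjNeStar mMap.{u} := by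
  intro h
  exact c1_ne_c2 (h c1 c2 (by rw [mMap_c1]; exact b1_ne) (by rw [mMap_c2]; exact b1_ne)
    (mMap_c1.trans mMap_c2.symm))

end Generators
section Detect

/-- lifting against `eMap` on the right detects surjectivity -/
lemma surj_of_hlp_eMap {X Y : Pointed.{u}} {r : X ⟶ Y} (h : HasLiftingProperty eMap r) :
    Function.Surjective r.toFun := by
  intro y
  let f : P1.{u} ⟶ X := ⟨fun _ => X.point, rfl⟩
  let g : P2.{u} ⟶ Y := ⟨fun z => z.elim Y.point (fun _ => y), rfl⟩
  obtain ⟨d, _, hd2⟩ := useHLP h f g (by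
    apply Pointed.Hom.ext; funext z
    show r.toFun X.point = Y.point
    rw [r.map_point])
  exact ⟨d.toFun b1, hom_congr hd2 b1⟩

/-- lifting against `pMap` on the right detects `pInjStar` -/
lemma istar_of_hlp_pMap {X Y : Pointed.{u}} {r : X ⟶ Y} (h : HasLiftingProperty pMap r) :
    pInjStar r := by
  intro x hx
  let f : P2.{u} ⟶ X := ⟨fun z => z.elim X.point (fun _ => x), rfl⟩
  let g : P1.{u} ⟶ Y := ⟨fun _ => Y.point, rfl⟩
  obtain ⟨d, hd1, _⟩ := useHLP h f g (by
    apply Pointed.Hom.ext; funext z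
    show r.toFun (z.elim X.point (fun _ => x)) = Y.point
    rcases P2cases z with hz | hz <;> subst hz
    · show r.toFun X.point = Y.point; rw [r.map_point]
    · exact hx)
  have e1 : d.toFun (pMap.toFun b1) = x := hom_congr hd1 b1
  have e2 : d.toFun (pMap.toFun b1) = X.point := d.map_point
  exact e1.symm.trans e2

/-- lifting against `mMap` on the right detects injectivity -/
lemma inj_of_hlp_mMap {X Y : Pointed.{u}} {r : X ⟶ Y} (h : HasLiftingProperty mMap r) :
    Function.Injective r.toFun := by
  intro x1 x2 hx
  let f : P3.{u} ⟶ X := ⟨fun z => z.elim X.point (fun b => cond b.down x2 x1), rfl⟩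
  let g : P2.{u} ⟶ Y := ⟨fun z => z.elim Y.point (fun _ => r.toFun x1), rfl⟩
  obtain ⟨d, hd1, _⟩ := useHLP h f g (by
    apply Pointed.Hom.ext; funext z
    show r.toFun (f.toFun z) = g.toFun (mMap.toFun z)
    rcases P3cases z with hz | hz | hz <;> subst hz
    · show r.toFun X.point = Y.point; rw [r.map_point]
    · rfl
    · exact hx.symm)
  have e1 : d.toFun (mMap.toFun c1) = x1 := hom_congr hd1 c1
  have e2 : d.toFun (mMap.toFun c2) = x2 := hom_congr hd1 c2
  have e12 : d.toFun (mMap.toFun c1) = d.toFun (mMap.toFun c2) := rfl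
  exact e1.symm.trans (e12.trans e2)

/-- lifting against `eMap` on the left detects surjectivity -/
lemma surj_of_hlp_left_eMap {A B : Pointed.{u}} {l : A ⟶ B} (h : HasLiftingProperty l eMap) :
    Function.Surjective l.toFun := by
  classical
  intro b
  by_contra hb
  push_neg at hb
  let f : A ⟶ P1.{u} := ⟨fun _ => P1.point, rfl⟩
  let g : B ⟶ P2.{u} := ⟨fun b' => if b' = b then b1 else P2.point, by
    beta_reduce
    rw [if_neg (fun hc => hb A.point (l.map_point.trans hc))]⟩
  obtain ⟨d, _, hd2⟩ := useHLP h f g (by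
    apply Pointed.Hom.ext; funext a
    show P2.point = (if l.toFun a = b then b1 else P2.point)
    rw [if_neg (hb a)])
  have e1 : eMap.toFun (d.toFun b) = b1 := (hom_congr hd2 b).trans (if_pos rfl)
  exact b1_ne ((show eMap.toFun (d.toFun b) = P2.point from rfl).symm.trans e1).symm

/-- lifting against `pMap` on the left detects injectivity -/
lemma inj_of_hlp_left_pMap {A B : Pointed.{u}} {l : A ⟶ B} (h : HasLiftingProperty l pMap) :
    Function.Injective l.toFun := by
  classical
  have aux : ∀ a1 a2 : A.X, a1 ≠ A.point → l.toFun a1 = l.toFun a2 → a1 = a2 := by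
    intro a1 a2 ha1 hl
    by_contra hne
    let f : A ⟶ P2.{u} := ⟨fun a => if a = a1 then b1 else P2.point, by
      beta_reduce
      rw [if_neg (fun hc => ha1 hc.symm)]⟩
    let g : B ⟶ P1.{u} := ⟨fun _ => P1.point, rfl⟩
    obtain ⟨d, hd1, _⟩ := useHLP h f g (Pointed.Hom.ext (funext fun a => rfl))
    have e1 : d.toFun (l.toFun a1) = b1 := (hom_congr hd1 a1).trans (if_pos rfl)
    have e2 : d.toFun (l.toFun a2) = P2.point :=
      (hom_congr hd1 a2).trans (if_neg (fun hc => hne hc.symm))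
    rw [hl] at e1
    exact b1_ne (e1.symm.trans e2)
  intro a1 a2 hl
  by_cases h1 : a1 = A.point
  · by_cases h2 : a2 = A.point
    · rw [h1, h2]
    · exact ((aux a2 a1 h2 hl.symm).symm)
  · exact aux a1 a2 h1 hl

/-- lifting against `mMap` on the left detects `pInjNeStar` -/
lemma ine_of_hlp_left_mMap {A B : Pointed.{u}} {l : A ⟶ B} (h : HasLiftingProperty l mMap) :
    pInjNeStar l := by
  classical
  intro a1 a2 h1 h2 hl
  by_contra hne
  have ha2 : a2 ≠ A.point := fun hc => h2 (by rw [hc, l.map_point])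
  let f : A ⟶ P3.{u} := ⟨fun a =>
      if a = a2 then c2 else if l.toFun a = l.toFun a1 then c1 else P3.point, by
    beta_reduce
    rw [if_neg (fun hc => ha2 hc.symm),
      if_neg (fun hc => h1 (hc.symm.trans l.map_point))]⟩
  let g : B ⟶ P2.{u} := ⟨fun b => if b = l.toFun a1 then b1 else P2.point, by
    beta_reduce
    rw [if_neg (fun hc => h1 hc.symm)]⟩
  obtain ⟨d, hd1, _⟩ := useHLP h f g (by
    apply Pointed.Hom.ext; funext a
    show mMap.toFun (if a = a2 then c2 else if l.toFun a = l.toFun a1 then c1 else P3.point)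
      = (if l.toFun a = l.toFun a1 then b1 else P2.point)
    by_cases hc : a = a2
    · rw [if_pos hc, mMap_c2, if_pos (by rw [hc, ← hl])]
    · rw [if_neg hc]
      by_cases hc2 : l.toFun a = l.toFun a1
      · rw [if_pos hc2, mMap_c1, if_pos hc2]
      · rw [if_neg hc2, if_neg hc2]; rfl)
  have e1 : d.toFun (l.toFun a1) = c1 := by
    refine (hom_congr hd1 a1).trans ?_
    show (if a1 = a2 then c2 else if l.toFun a1 = l.toFun a1 then c1 else P3.point) = c1
    rw [if_neg hne, if_pos rfl]
  have e2 : d.toFun (l.toFun a2) = c2 := (hom_congr hd1 a2).trans (if_pos rfl)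
  rw [hl] at e1
  exact c1_ne_c2 (e1.symm.trans e2)

/-- a non-surjection on the right forces surjectivity on the left -/
lemma surj_left_of_not_surj {A B X Y : Pointed.{u}} {l : A ⟶ B} {r : X ⟶ Y}
    (h : HasLiftingProperty l r) (hr : ¬ Function.Surjective r.toFun) :
    Function.Surjective l.toFun := by
  classical
  obtain ⟨y₀, hy₀⟩ : ∃ y, ∀ x, r.toFun x ≠ y := by
    by_contra hc
    push_neg at hc
    exact hr hc
  intro b
  by_contra hb
  push_neg at hb
  let f : A ⟶ X := ⟨fun _ => X.point, rfl⟩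
  let g : B ⟶ Y := ⟨fun b' => if b' = b then y₀ else Y.point, by
    beta_reduce
    rw [if_neg (fun hc => hb A.point (l.map_point.trans hc))]⟩
  obtain ⟨d, _, hd2⟩ := useHLP h f g (by
    apply Pointed.Hom.ext; funext a
    show r.toFun X.point = (if l.toFun a = b then y₀ else Y.point)
    rw [r.map_point, if_neg (hb a)])
  have e1 : r.toFun (d.toFun b) = y₀ := (hom_congr hd2 b).trans (if_pos rfl)
  exact hy₀ _ e1

/-- a non-`pInjStar` map on the right forces injectivity on the left -/
lemma inj_left_of_not_istar {A B X Y : Pointed.{u}} {l : A ⟶ B} {r : X ⟶ Y}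
    (h : HasLiftingProperty l r) (x₀ : X.X) (hx : x₀ ≠ X.point)
    (hrx : r.toFun x₀ = Y.point) : Function.Injective l.toFun := by
  classical
  have aux : ∀ a1 a2 : A.X, a1 ≠ A.point → l.toFun a1 = l.toFun a2 → a1 = a2 := by
    intro a1 a2 ha1 hl
    by_contra hne
    let f : A ⟶ X := ⟨fun a => if a = a1 then x₀ else X.point, by
      beta_reduce
      rw [if_neg (fun hc => ha1 hc.symm)]⟩
    let g : B ⟶ Y := ⟨fun _ => Y.point, rfl⟩
    obtain ⟨d, hd1, _⟩ := useHLP h f g (by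
      apply Pointed.Hom.ext; funext a
      show r.toFun (if a = a1 then x₀ else X.point) = Y.point
      by_cases hc : a = a1
      · rw [if_pos hc]; exact hrx
      · rw [if_neg hc, r.map_point])
    have e1 : d.toFun (l.toFun a1) = x₀ := (hom_congr hd1 a1).trans (if_pos rfl)
    have e2 : d.toFun (l.toFun a2) = X.point :=
      (hom_congr hd1 a2).trans (if_neg (fun hc => hne hc.symm))
    rw [hl] at e1
    exact hx (e1.symm.trans e2)
  intro a1 a2 hl
  by_cases h1 : a1 = A.point
  · by_cases h2 : a2 = A.point
    · rw [h1, h2]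
    · exact ((aux a2 a1 h2 hl.symm).symm)
  · exact aux a1 a2 h1 hl

/-- a non-`pInjNeStar` map on the right forces `pInjNeStar` on the left -/
lemma ine_left_of_not_ine {A B X Y : Pointed.{u}} {l : A ⟶ B} {r : X ⟶ Y}
    (h : HasLiftingProperty l r) (x1 x2 : X.X) (hne : x1 ≠ x2)
    (heq : r.toFun x1 = r.toFun x2) (hnpt : r.toFun x1 ≠ Y.point) : pInjNeStar l := by
  classical
  intro a1 a2 h1 h2 hl
  by_contra hA
  have ha2 : a2 ≠ A.point := fun hc => h2 (by rw [hc, l.map_point])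
  let f : A ⟶ X := ⟨fun a =>
      if a = a2 then x2 else if l.toFun a = l.toFun a1 then x1 else X.point, by
    beta_reduce
    rw [if_neg (fun hc => ha2 hc.symm),
      if_neg (fun hc => h1 (hc.symm.trans l.map_point))]⟩
  let g : B ⟶ Y := ⟨fun b => if b = l.toFun a1 then r.toFun x1 else Y.point, by
    beta_reduce
    rw [if_neg (fun hc => h1 hc.symm)]⟩
  obtain ⟨d, hd1, _⟩ := useHLP h f g (by
    apply Pointed.Hom.ext; funext a
    show r.toFun (if a = a2 then x2 else if l.toFun a = l.toFun a1 then x1 else X.point)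
      = (if l.toFun a = l.toFun a1 then r.toFun x1 else Y.point)
    by_cases hc : a = a2
    · rw [if_pos hc, if_pos (by rw [hc, ← hl]), heq]
    · rw [if_neg hc]
      by_cases hc2 : l.toFun a = l.toFun a1
      · rw [if_pos hc2, if_pos hc2]
      · rw [if_neg hc2, if_neg hc2, r.map_point])
  have e1 : d.toFun (l.toFun a1) = x1 := by
    refine (hom_congr hd1 a1).trans ?_
    show (if a1 = a2 then x2 else if l.toFun a1 = l.toFun a1 then x1 else X.point) = x1
    rw [if_neg hA, if_pos rfl]
  have e2 : d.toFun (l.toFun a2) = x2 := (hom_congr hd1 a2).trans (if_pos rfl)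
  rw [hl] at e1
  exact hne (e1.symm.trans e2)

end Detect
section Factor

lemma pBij_id (X : Pointed.{u}) : pBij (𝟙 X) := Function.bijective_id

lemma bij_of_self_lift {A B : Pointed.{u}} {f : A ⟶ B} (h : HasLiftingProperty f f) :
    Function.Bijective f.toFun := by
  obtain ⟨d, hd1, hd2⟩ := useHLP h (𝟙 A) (𝟙 B) (by simp)
  constructor
  · intro a1 a2 hx
    have e1 : d.toFun (f.toFun a1) = a1 := hom_congr hd1 a1
    have e2 : d.toFun (f.toFun a2) = a2 := hom_congr hd1 a2
    rw [hx] at e1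
    exact e1.symm.trans e2
  · intro b
    exact ⟨d.toFun b, hom_congr hd2 b⟩

lemma fact_inj_surj {A B : Pointed.{u}} (f : A ⟶ B) :
    ∃ (E : Pointed.{u}) (l : A ⟶ E) (r : E ⟶ B),
      Function.Injective l.toFun ∧ Function.Surjective r.toFun ∧ l ≫ r = f := by
  refine ⟨⟨Sum A.X B.X, Sum.inl A.point⟩, ⟨Sum.inl, rfl⟩,
    ⟨Sum.elim f.toFun _root_.id, f.map_point⟩, ?_, ?_, ?_⟩
  · exact fun a b h => Sum.inl.inj h
  · exact fun b => ⟨Sum.inr b, rfl⟩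
  · exact Pointed.Hom.ext (funext fun a => rfl)

lemma fact_surj_inj {A B : Pointed.{u}} (f : A ⟶ B) :
    ∃ (E : Pointed.{u}) (l : A ⟶ E) (r : E ⟶ B),
      Function.Surjective l.toFun ∧ Function.Injective r.toFun ∧ l ≫ r = f := by
  refine ⟨⟨{b : B.X // ∃ a, f.toFun a = b}, ⟨B.point, A.point, f.map_point⟩⟩,
    ⟨fun a => ⟨f.toFun a, a, rfl⟩, Subtype.ext f.map_point⟩, ⟨Subtype.val, rfl⟩, ?_, ?_, ?_⟩
  · rintro ⟨b, a, ha⟩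
    exact ⟨a, Subtype.ext ha⟩
  · exact fun x y h => Subtype.ext h
  · exact Pointed.Hom.ext (funext fun a => rfl)

lemma fact_sine_istar {A B : Pointed.{u}} (f : A ⟶ B) :
    ∃ (E : Pointed.{u}) (l : A ⟶ E) (r : E ⟶ B),
      (Function.Surjective l.toFun ∧ pInjNeStar l) ∧ pInjStar r ∧ l ≫ r = f := by
  classical
  let lf : A.X → Option {a : A.X // f.toFun a ≠ B.point} :=
    fun a => if h : f.toFun a = B.point then none else some ⟨a, h⟩
  have lf_pos : ∀ (a) (h : f.toFun a = B.point), lf a = none := fun a h => dif_pos h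
  have lf_neg : ∀ (a) (h : ¬(f.toFun a = B.point)), lf a = some ⟨a, h⟩ := fun a h => dif_neg h
  refine ⟨⟨Option {a : A.X // f.toFun a ≠ B.point}, none⟩,
    ⟨lf, lf_pos A.point f.map_point⟩,
    ⟨fun o => o.elim B.point (fun s => f.toFun s.1), rfl⟩, ⟨?_, ?_⟩, ?_, ?_⟩
  · rintro (_ | ⟨a, ha⟩)
    · exact ⟨A.point, lf_pos A.point f.map_point⟩
    · exact ⟨a, lf_neg a ha⟩
  · intro a a' h h' heq
    by_cases hc : f.toFun a = B.point
    · exact absurd (lf_pos a hc) h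
    by_cases hc' : f.toFun a' = B.point
    · exact absurd (lf_pos a' hc') h'
    have e : lf a = lf a' := heq
    rw [lf_neg a hc, lf_neg a' hc'] at e
    exact congrArg Subtype.val (Option.some_injective _ e)
  · rintro (_ | ⟨a, ha⟩) h
    · rfl
    · exact absurd h ha
  · apply Pointed.Hom.ext; funext a
    by_cases hc : f.toFun a = B.point
    · exact (congrArg (fun o => Option.elim o B.point (fun s => f.toFun s.1))
        (lf_pos a hc)).trans hc.symm
    · exact congrArg (fun o => Option.elim o B.point (fun s => f.toFun s.1)) (lf_neg a hc)

lemma fact_ine_sistar {A B : Pointed.{u}} (f : A ⟶ B) :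
    ∃ (E : Pointed.{u}) (l : A ⟶ E) (r : E ⟶ B),
      pInjNeStar l ∧ (Function.Surjective r.toFun ∧ pInjStar r) ∧ l ≫ r = f := by
  classical
  let lf : A.X → Option ({a : A.X // f.toFun a ≠ B.point} ⊕ {b : B.X // b ≠ B.point}) :=
    fun a => if h : f.toFun a = B.point then none else some (Sum.inl ⟨a, h⟩)
  have lf_pos : ∀ (a) (h : f.toFun a = B.point), lf a = none := fun a h => dif_pos h
  have lf_neg : ∀ (a) (h : ¬(f.toFun a = B.point)), lf a = some (Sum.inl ⟨a, h⟩) :=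
    fun a h => dif_neg h
  let rf : Option ({a : A.X // f.toFun a ≠ B.point} ⊕ {b : B.X // b ≠ B.point}) → B.X :=
    fun o => o.elim B.point (Sum.elim (fun s => f.toFun s.1) (fun s => s.1))
  refine ⟨⟨Option ({a : A.X // f.toFun a ≠ B.point} ⊕ {b : B.X // b ≠ B.point}), none⟩,
    ⟨lf, lf_pos A.point f.map_point⟩, ⟨rf, rfl⟩, ?_, ⟨?_, ?_⟩, ?_⟩
  · intro a a' h h' heq
    by_cases hc : f.toFun a = B.point
    · exact absurd (lf_pos a hc) h
    by_cases hc' : f.toFun a' = B.point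
    · exact absurd (lf_pos a' hc') h'
    have e : lf a = lf a' := heq
    rw [lf_neg a hc, lf_neg a' hc'] at e
    exact congrArg Subtype.val (Sum.inl.inj (Option.some_injective _ e))
  · intro b
    by_cases hb : b = B.point
    · exact ⟨none, hb.symm⟩
    · exact ⟨some (Sum.inr ⟨b, hb⟩), rfl⟩
  · rintro (_ | (⟨a, ha⟩ | ⟨b, hb⟩)) h
    · rfl
    · exact absurd h ha
    · exact absurd h hb
  · apply Pointed.Hom.ext; funext a
    by_cases hc : f.toFun a = B.point
    · exact (congrArg rf (lf_pos a hc)).trans hc.symm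
    · exact congrArg rf (lf_neg a hc)

end Factor

section WFS

lemma wfs_bij_any : IsWFS pBij.{u} pAny := by
  refine ⟨fun {A B} f => ⟨A, 𝟙 A, f, pBij_id A, trivial, Category.id_comp f⟩, ?_, ?_⟩
  · intro A B l
    constructor
    · intro hl X Y r _
      exact hlp_bij_left r hl
    · intro H
      exact bij_of_self_lift (H l trivial)
  · intro X Y r
    exact ⟨fun _ {A B} l hl => hlp_bij_left r hl, fun _ => trivial⟩

lemma wfs_any_bij : IsWFS pAny.{u} pBij := by
  refine ⟨fun {A B} f => ⟨B, f, 𝟙 B, trivial, pBij_id B, Category.comp_id f⟩, ?_, ?_⟩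
  · intro A B l
    exact ⟨fun _ {X Y} r hr => hlp_bij_right l hr, fun _ => trivial⟩
  · intro X Y r
    constructor
    · intro hr A B l _
      exact hlp_bij_right l hr
    · intro H
      exact bij_of_self_lift (H r trivial)

lemma wfs_inj_surj : IsWFS pInj.{u} pSurj := by
  refine ⟨fun {A B} f => ?_, ?_, ?_⟩
  · obtain ⟨E, l, r, h1, h2, h3⟩ := fact_inj_surj f
    exact ⟨E, l, r, h1, h2, h3⟩
  · intro A B l
    constructor
    · intro hl X Y r hr
      exact hlp_inj_surj hl hr
    · intro H
      exact inj_of_hlp_left_pMap (H pMap pMap_surj)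
  · intro X Y r
    constructor
    · intro hr A B l hl
      exact hlp_inj_surj hl hr
    · intro H
      exact surj_of_hlp_eMap (H eMap eMap_inj)

lemma wfs_surj_inj : IsWFS pSurj.{u} pInj := by
  refine ⟨fun {A B} f => ?_, ?_, ?_⟩
  · obtain ⟨E, l, r, h1, h2, h3⟩ := fact_surj_inj f
    exact ⟨E, l, r, h1, h2, h3⟩
  · intro A B l
    constructor
    · intro hl X Y r hr
      exact hlp_surj_inj hl hr
    · intro H
      exact surj_of_hlp_left_eMap (H eMap eMap_inj)
  · intro X Y r
    constructor
    · intro hr A B l hl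
      exact hlp_surj_inj hl hr
    · intro H
      exact inj_of_hlp_mMap (H mMap mMap_surj)

lemma wfs_sine_istar :
    IsWFS (fun X Y f => pSurj f ∧ pInjNeStar f : MorphismProperty Pointed.{u}) pInjStar := by
  refine ⟨fun {A B} f => ?_, ?_, ?_⟩
  · obtain ⟨E, l, r, h1, h2, h3⟩ := fact_sine_istar f
    exact ⟨E, l, r, h1, h2, h3⟩
  · intro A B l
    constructor
    · intro hl X Y r hr
      exact hlp_sine_istar hl.1 hl.2 hr
    · intro H
      exact ⟨surj_of_hlp_left_eMap (H eMap eMap_istar),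
        ine_of_hlp_left_mMap (H mMap mMap_istar)⟩
  · intro X Y r
    constructor
    · intro hr A B l hl
      exact hlp_sine_istar hl.1 hl.2 hr
    · intro H
      exact istar_of_hlp_pMap (H pMap ⟨pMap_surj, pMap_ine⟩)

lemma wfs_ine_sistar :
    IsWFS pInjNeStar.{u} (fun X Y f => pSurj f ∧ pInjStar f : MorphismProperty Pointed.{u}) := by
  refine ⟨fun {A B} f => ?_, ?_, ?_⟩
  · obtain ⟨E, l, r, h1, h2, h3⟩ := fact_ine_sistar f
    exact ⟨E, l, r, h1, h2, h3⟩
  · intro A B l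
    constructor
    · intro hl X Y r hr
      exact hlp_ine_sistar hl hr.1 hr.2
    · intro H
      exact ine_of_hlp_left_mMap (H mMap ⟨mMap_surj, mMap_istar⟩)
  · intro X Y r
    constructor
    · intro hr A B l hl
      exact hlp_ine_sistar hl hr.1 hr.2
    · intro H
      exact ⟨surj_of_hlp_eMap (H eMap eMap_ine), istar_of_hlp_pMap (H pMap pMap_ine)⟩

end WFS
section Classify

lemma MP_ext {P Q : MorphismProperty Pointed.{u}}
    (h : ∀ (X Y : Pointed.{u}) (f : X ⟶ Y), P f ↔ Q f) : P = Q := by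
  funext X Y f
  exact propext (h X Y f)

lemma not_llp_witness {L R : MorphismProperty Pointed.{u}} (h : IsWFS L R)
    {A B : Pointed.{u}} {l : A ⟶ B} (hl : ¬ L l) :
    ∃ (X Y : Pointed.{u}) (r : X ⟶ Y), R r ∧ ¬ HasLiftingProperty l r := by
  by_contra hc
  push_neg at hc
  exact hl ((h.2.1 l).mpr (fun {X Y} r hr => hc X Y r hr))

/-- Classification of weak factorization systems on `Pointed`. -/
theorem wfs_classify (L R : MorphismProperty Pointed.{u}) (h : IsWFS L R) :
    (L = pBij ∧ R = pAny) ∨ (L = pAny ∧ R = pBij) ∨ (L = pInj ∧ R = pSurj) ∨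
      (L = pSurj ∧ R = pInj) ∨
      (L = (fun X Y f => pSurj f ∧ pInjNeStar f) ∧ R = pInjStar) ∨
      (L = pInjNeStar ∧ R = (fun X Y f => pSurj f ∧ pInjStar f)) := by
  have lift_of : ∀ {A B X Y : Pointed.{u}} (l : A ⟶ B) (r : X ⟶ Y),
      L l → R r → HasLiftingProperty l r := fun l r hl hr => (h.2.1 l).mp hl r hr
  by_cases hp : L pMap
  · have hRstar : ∀ {X Y : Pointed.{u}} (r : X ⟶ Y), R r → pInjStar r :=
      fun r hr => istar_of_hlp_pMap (lift_of pMap r hp hr)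
    by_cases hm : L mMap
    · have hRinj : ∀ {X Y : Pointed.{u}} (r : X ⟶ Y), R r → Function.Injective r.toFun :=
        fun r hr => inj_of_hlp_mMap (lift_of mMap r hm hr)
      by_cases he : L eMap
      · -- (pAny, pBij)
        have hRsurj : ∀ {X Y : Pointed.{u}} (r : X ⟶ Y), R r → Function.Surjective r.toFun :=
          fun r hr => surj_of_hlp_eMap (lift_of eMap r he hr)
        have hR : R = pBij := MP_ext (fun X Y r => ⟨fun hr => ⟨hRinj r hr, hRsurj r hr⟩,
          fun hr => (h.2.2 r).mpr (fun l _ => hlp_bij_right l hr)⟩)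
        have hL : L = pAny := MP_ext (fun A B l => ⟨fun _ => trivial,
          fun _ => (h.2.1 l).mpr (fun r hr => hlp_bij_right l (by rw [hR] at hr; exact hr))⟩)
        exact Or.inr (Or.inl ⟨hL, hR⟩)
      · -- (pSurj, pInj)
        obtain ⟨X₁, Y₁, r₁, hr₁R, hr₁n⟩ := not_llp_witness h he
        have hr₁ns : ¬ Function.Surjective r₁.toFun :=
          fun hs => hr₁n (hlp_inj_surj eMap_inj hs)
        have hLsurj : ∀ {A B : Pointed.{u}} (l : A ⟶ B), L l → Function.Surjective l.toFun :=
          fun l hl => surj_left_of_not_surj (lift_of l r₁ hl hr₁R) hr₁ns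
        have hL : L = pSurj := MP_ext (fun A B l => ⟨fun hl => hLsurj l hl,
          fun hl => (h.2.1 l).mpr (fun r hr => hlp_surj_inj hl (hRinj r hr))⟩)
        have hR : R = pInj := MP_ext (fun X Y r => ⟨fun hr => hRinj r hr,
          fun hr => (h.2.2 r).mpr (fun l hl => hlp_surj_inj (hLsurj l hl) hr)⟩)
        exact Or.inr (Or.inr (Or.inr (Or.inl ⟨hL, hR⟩)))
    · -- m ∉ L
      obtain ⟨X₀, Y₀, r₀, hr₀R, hr₀n⟩ := not_llp_witness h hm
      have hr₀ni : ¬ Function.Injective r₀.toFun :=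
        fun hi => hr₀n (hlp_surj_inj mMap_surj hi)
      have hex : ∃ x1 x2, x1 ≠ x2 ∧ r₀.toFun x1 = r₀.toFun x2 := by
        by_contra hc
        push_neg at hc
        exact hr₀ni (fun x1 x2 hx => by_contra (fun hne => hc x1 x2 hne hx))
      obtain ⟨x1, x2, hx12, hxeq⟩ := hex
      have hxn : r₀.toFun x1 ≠ Y₀.point := by
        intro hpt
        have h1 := hRstar r₀ hr₀R x1 hpt
        have h2 := hRstar r₀ hr₀R x2 (hxeq ▸ hpt)
        exact hx12 (h1.trans h2.symm)
      have hLine : ∀ {A B : Pointed.{u}} (l : A ⟶ B), L l → pInjNeStar l :=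
        fun l hl => ine_left_of_not_ine (lift_of l r₀ hl hr₀R) x1 x2 hx12 hxeq hxn
      by_cases he : L eMap
      · -- (pInjNeStar, pSurj ∧ pInjStar)
        have hRsurj : ∀ {X Y : Pointed.{u}} (r : X ⟶ Y), R r → Function.Surjective r.toFun :=
          fun r hr => surj_of_hlp_eMap (lift_of eMap r he hr)
        have hL : L = pInjNeStar := MP_ext (fun A B l => ⟨fun hl => hLine l hl,
          fun hl => (h.2.1 l).mpr (fun r hr => hlp_ine_sistar hl (hRsurj r hr) (hRstar r hr))⟩)
        have hR : R = (fun X Y f => pSurj f ∧ pInjStar f) := MP_ext (fun X Y r =>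
          ⟨fun hr => ⟨hRsurj r hr, hRstar r hr⟩,
           fun hr => (h.2.2 r).mpr (fun l hl => hlp_ine_sistar (hLine l hl) hr.1 hr.2)⟩)
        exact Or.inr (Or.inr (Or.inr (Or.inr (Or.inr ⟨hL, hR⟩))))
      · -- (pSurj ∧ pInjNeStar, pInjStar)
        obtain ⟨X₁, Y₁, r₁, hr₁R, hr₁n⟩ := not_llp_witness h he
        have hr₁ns : ¬ Function.Surjective r₁.toFun :=
          fun hs => hr₁n (hlp_inj_surj eMap_inj hs)
        have hLsurj : ∀ {A B : Pointed.{u}} (l : A ⟶ B), L l → Function.Surjective l.toFun :=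
          fun l hl => surj_left_of_not_surj (lift_of l r₁ hl hr₁R) hr₁ns
        have hL : L = (fun X Y f => pSurj f ∧ pInjNeStar f) := MP_ext (fun A B l =>
          ⟨fun hl => ⟨hLsurj l hl, hLine l hl⟩,
           fun hl => (h.2.1 l).mpr (fun r hr => hlp_sine_istar hl.1 hl.2 (hRstar r hr))⟩)
        have hR : R = pInjStar := MP_ext (fun X Y r => ⟨fun hr => hRstar r hr,
          fun hr => (h.2.2 r).mpr (fun l hl => hlp_sine_istar (hLsurj l hl) (hLine l hl) hr)⟩)
        exact Or.inr (Or.inr (Or.inr (Or.inr (Or.inl ⟨hL, hR⟩))))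
  · -- p ∉ L
    obtain ⟨X₀, Y₀, r₀, hr₀R, hr₀n⟩ := not_llp_witness h hp
    have hr₀ni : ¬ pInjStar r₀ := fun hi => hr₀n (hlp_sine_istar pMap_surj pMap_ine hi)
    have hex : ∃ x₀, x₀ ≠ X₀.point ∧ r₀.toFun x₀ = Y₀.point := by
      by_contra hc
      push_neg at hc
      exact hr₀ni (fun a ha => by_contra (fun hne => hc a hne ha))
    obtain ⟨x₀, hx₀ne, hx₀pt⟩ := hex
    have hLinj : ∀ {A B : Pointed.{u}} (l : A ⟶ B), L l → Function.Injective l.toFun :=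
      fun l hl => inj_left_of_not_istar (lift_of l r₀ hl hr₀R) x₀ hx₀ne hx₀pt
    by_cases he : L eMap
    · -- (pInj, pSurj)
      have hRsurj : ∀ {X Y : Pointed.{u}} (r : X ⟶ Y), R r → Function.Surjective r.toFun :=
        fun r hr => surj_of_hlp_eMap (lift_of eMap r he hr)
      have hL : L = pInj := MP_ext (fun A B l => ⟨fun hl => hLinj l hl,
        fun hl => (h.2.1 l).mpr (fun r hr => hlp_inj_surj hl (hRsurj r hr))⟩)
      have hR : R = pSurj := MP_ext (fun X Y r => ⟨fun hr => hRsurj r hr,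
        fun hr => (h.2.2 r).mpr (fun l hl => hlp_inj_surj (hLinj l hl) hr)⟩)
      exact Or.inr (Or.inr (Or.inl ⟨hL, hR⟩))
    · -- (pBij, pAny)
      obtain ⟨X₁, Y₁, r₁, hr₁R, hr₁n⟩ := not_llp_witness h he
      have hr₁ns : ¬ Function.Surjective r₁.toFun :=
        fun hs => hr₁n (hlp_inj_surj eMap_inj hs)
      have hLsurj : ∀ {A B : Pointed.{u}} (l : A ⟶ B), L l → Function.Surjective l.toFun :=
        fun l hl => surj_left_of_not_surj (lift_of l r₁ hl hr₁R) hr₁ns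
      have hL : L = pBij := MP_ext (fun A B l => ⟨fun hl => ⟨hLinj l hl, hLsurj l hl⟩,
        fun hl => (h.2.1 l).mpr (fun r _ => hlp_bij_left r hl)⟩)
      have hR : R = pAny := MP_ext (fun X Y r => ⟨fun _ => trivial,
        fun _ => (h.2.2 r).mpr (fun l hl => hlp_bij_left r (by rw [hL] at hl; exact hl))⟩)
      exact Or.inl ⟨hL, hR⟩

end Classify
section MSInfra

lemma interMP_any_right (P : MorphismProperty Pointed.{u}) : interMP P pAny = P :=
  MP_ext (fun X Y f => ⟨fun h => h.1, fun h => ⟨h, trivial⟩⟩)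

lemma interMP_any_left (P : MorphismProperty Pointed.{u}) : interMP pAny P = P :=
  MP_ext (fun X Y f => ⟨fun h => h.2, fun h => ⟨trivial, h⟩⟩)

lemma tot_any : TwoOutOfThree pAny.{u} :=
  fun _ _ => ⟨fun _ _ => trivial, fun _ _ => trivial, fun _ _ => trivial⟩

lemma tot_bij : TwoOutOfThree pBij.{u} := by
  intro A B D f g
  refine ⟨?_, ?_, ?_⟩
  · intro hf hg
    exact hg.comp hf
  · intro hf hfg
    constructor
    · intro b b' hb
      obtain ⟨a, ha⟩ := hf.2 b
      obtain ⟨a', ha'⟩ := hf.2 b'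
      rw [← ha, ← ha'] at hb ⊢
      exact congrArg f.toFun (hfg.1 hb)
    · intro d
      obtain ⟨a, ha⟩ := hfg.2 d
      exact ⟨f.toFun a, ha⟩
  · intro hg hfg
    constructor
    · intro a a' ha
      exact hfg.1 (show g.toFun (f.toFun a) = g.toFun (f.toFun a') from congrArg g.toFun ha)
    · intro b
      obtain ⟨a, ha⟩ := hfg.2 (g.toFun b)
      exact ⟨a, hg.1 ha⟩

/-- auxiliary pointed maps for the elimination arguments -/
def e23 : P2.{u} ⟶ P3.{u} := ⟨Option.map (fun _ => ULift.up false), rfl⟩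
def m33 : P3.{u} ⟶ P3.{u} := ⟨Option.map (fun _ => ULift.up false), rfl⟩
def c3 : P3.{u} ⟶ P1.{u} := ⟨fun _ => P1.point, rfl⟩

lemma comp_ep : eMap.{u} ≫ pMap = 𝟙 P1 := Pointed.Hom.ext (funext fun _ => rfl)

lemma comp_em : e23.{u} ≫ mMap = 𝟙 P2 :=
  Pointed.Hom.ext (funext fun z => by cases z <;> rfl)

lemma comp_mc : m33.{u} ≫ c3 = c3 := Pointed.Hom.ext (funext fun _ => rfl)

lemma e23_not_surj : ¬ Function.Surjective e23.{u}.toFun := by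
  intro h
  obtain ⟨z, hz⟩ := h c2
  rcases z with _ | z
  · exact c2_ne hz.symm
  · exact c1_ne_c2 hz

lemma m33_not_ine : ¬ pInjNeStar m33.{u} := by
  intro h
  have e1 : m33.{u}.toFun c1 = c1 := rfl
  have e2 : m33.{u}.toFun c2 = c1 := rfl
  exact c1_ne_c2 (h c1 c2 (by rw [e1]; exact c1_ne) (by rw [e2]; exact c1_ne) (e1.trans e2.symm))

lemma c3_surj : Function.Surjective c3.{u}.toFun := fun b => ⟨none, rfl⟩

lemma c3_ine : pInjNeStar c3.{u} := fun a a' h _ _ => absurd rfl h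

lemma id_ine (X : Pointed.{u}) : pInjNeStar (𝟙 X) := fun _ _ _ _ h => h

/-- compositions -/
lemma comp_surj {A E B : Pointed.{u}} {l : A ⟶ E} {r : E ⟶ B}
    (hl : Function.Surjective l.toFun) (hr : Function.Surjective r.toFun) :
    Function.Surjective (l ≫ r).toFun := hr.comp hl

lemma comp_inj {A E B : Pointed.{u}} {l : A ⟶ E} {r : E ⟶ B}
    (hl : Function.Injective l.toFun) (hr : Function.Injective r.toFun) :
    Function.Injective (l ≫ r).toFun := hr.comp hl

lemma comp_istar_of_inj {A E B : Pointed.{u}} {l : A ⟶ E} {r : E ⟶ B}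
    (hl : Function.Injective l.toFun) (hr : pInjStar r) : pInjStar (l ≫ r) :=
  fun a ha => hl ((hr _ ha).trans l.map_point.symm)

lemma comp_ine_of_inj {A E B : Pointed.{u}} {l : A ⟶ E} {r : E ⟶ B}
    (hl : pInjNeStar l) (hr : Function.Injective r.toFun) : pInjNeStar (l ≫ r) := by
  intro a a' ha ha' heq
  have hla : l.toFun a ≠ E.point := fun hc =>
    ha (show r.toFun (l.toFun a) = B.point from by rw [hc, r.map_point])
  have hla' : l.toFun a' ≠ E.point := fun hc =>
    ha' (show r.toFun (l.toFun a') = B.point from by rw [hc, r.map_point])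
  exact hl a a' hla hla' (hr heq)

/-- every weak equivalence factors as a trivial cofibration then trivial fibration -/
lemma W_factor {C F W : MorphismProperty Pointed.{u}} (h23 : TwoOutOfThree W)
    (hws2 : IsWFS C (interMP F W)) {A B : Pointed.{u}} (w : A ⟶ B) (hw : W w) :
    ∃ (E : Pointed.{u}) (l : A ⟶ E) (r : E ⟶ B), (C l ∧ W l) ∧ interMP F W r ∧ l ≫ r = w := by
  obtain ⟨E, l, r, hl, hr, hc⟩ := hws2.1 w
  have hWl : W l := (h23 l r).2.2 hr.2 (by rw [hc]; exact hw)
  exact ⟨E, l, r, ⟨hl, hWl⟩, hr, hc⟩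

lemma W_eq_any {C F W : MorphismProperty Pointed.{u}} (h23 : TwoOutOfThree W)
    (hws2 : IsWFS C (interMP F W))
    (hsub : ∀ {A B : Pointed.{u}} (f : A ⟶ B), C f → W f) : W = pAny := by
  apply MP_ext
  intro X Y f
  refine ⟨fun _ => trivial, fun _ => ?_⟩
  obtain ⟨E, l, r, hl, hr, hc⟩ := hws2.1 f
  have := (h23 l r).1 (hsub l hl) hr.2
  rwa [hc] at this

end MSInfra

section Backward

lemma ms_any {L R : MorphismProperty Pointed.{u}} (h : IsWFS L R) :
    IsModelStructure L R pAny := by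
  refine ⟨tot_any, ?_, ?_⟩
  · rw [interMP_any_right]; exact h
  · rw [interMP_any_right]; exact h

lemma ms_bij : IsModelStructure pAny.{u} pAny pBij := by
  refine ⟨tot_bij, ?_, ?_⟩
  · rw [interMP_any_left]; exact wfs_bij_any
  · rw [interMP_any_left]; exact wfs_any_bij

end Backward
/-- **The seven model structures on the category of pointed sets (Goodwillie).** -/
theorem pointed_model_structure_classification (C F W : MorphismProperty Pointed.{u}) :
    IsModelStructure C F W ↔
      ((C = pAny ∧ F = pAny ∧ W = pBij) ∨
       (C = pAny ∧ F = pBij ∧ W = pAny) ∨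
       (C = pBij ∧ F = pAny ∧ W = pAny) ∨
       (C = pInj ∧ F = pSurj ∧ W = pAny) ∨
       (C = pSurj ∧ F = pInj ∧ W = pAny) ∨
       (C = (fun X Y f => pSurj f ∧ pInjNeStar f) ∧ F = pInjStar ∧ W = pAny) ∨
       (C = pInjNeStar ∧ F = (fun X Y f => pSurj f ∧ pInjStar f) ∧ W = pAny)) := by
  constructor
  · intro hms
    obtain ⟨h23, hws1, hws2⟩ := hms
    rcases wfs_classify _ _ hws1 with ⟨hCW, hF⟩ | ⟨hCW, hF⟩ | ⟨hCW, hF⟩ | ⟨hCW, hF⟩ |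
      ⟨hCW, hF⟩ | ⟨hCW, hF⟩
    -- Row 1 : (interMP C W, F) = (pBij, pAny)
    · rcases wfs_classify _ _ hws2 with ⟨hC, hFW⟩ | ⟨hC, hFW⟩ | ⟨hC, hFW⟩ | ⟨hC, hFW⟩ |
        ⟨hC, hFW⟩ | ⟨hC, hFW⟩
      · -- (1,1) diagonal : (pBij, pAny, pAny)
        have hW : W = pAny := W_eq_any h23 hws2 (fun f hf =>
          (show interMP C W f from by rw [hCW]; rw [hC] at hf; exact hf).2)
        exact Or.inr (Or.inr (Or.inl ⟨hC, hF, hW⟩))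
      · -- (1,2) : (pAny, pAny, pBij)
        have hW : W = pBij := by
          apply MP_ext
          intro X Y f
          constructor
          · intro hw
            obtain ⟨E, l, r, hl, hr, hco⟩ := W_factor h23 hws2 f hw
            have hli : interMP C W l := hl
            rw [hCW] at hli
            rw [hFW] at hr
            show Function.Bijective f.toFun
            rw [← hco]
            exact hr.comp hli
          · intro hb
            exact (show interMP C W f from by rw [hCW]; exact hb).2
        exact Or.inl ⟨hC, hF, hW⟩
      · -- (1,3) eliminated
        exfalso
        have hWp : W pMap := (show interMP F W pMap from by rw [hFW]; exact pMap_surj).2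
        have hWid : W (𝟙 P1) := (show interMP C W (𝟙 P1) from by
          rw [hCW]; exact pBij_id _).2
        have hWe : W eMap := (h23 eMap pMap).2.2 hWp (by rw [comp_ep]; exact hWid)
        obtain ⟨E, l, r, hl, hr, hco⟩ := W_factor h23 hws2 eMap hWe
        have hli : interMP C W l := hl
        rw [hCW] at hli
        rw [hFW] at hr
        have : Function.Surjective eMap.{u}.toFun := by
          rw [← hco]; exact comp_surj hli.2 hr
        exact eMap_not_surj this
      · -- (1,4) eliminated
        exfalso
        have hWe : W eMap := (show interMP F W eMap from by rw [hFW]; exact eMap_inj).2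
        have hWid : W (𝟙 P1) := (show interMP C W (𝟙 P1) from by
          rw [hCW]; exact pBij_id _).2
        have hWp : W pMap := (h23 eMap pMap).2.1 hWe (by rw [comp_ep]; exact hWid)
        obtain ⟨E, l, r, hl, hr, hco⟩ := W_factor h23 hws2 pMap hWp
        have hli : interMP C W l := hl
        rw [hCW] at hli
        rw [hFW] at hr
        have : Function.Injective pMap.{u}.toFun := by
          rw [← hco]; exact comp_inj hli.1 hr
        exact pMap_not_inj this
      · -- (1,5) eliminated
        exfalso
        have hWe : W eMap := (show interMP F W eMap from by rw [hFW]; exact eMap_istar).2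
        have hWid : W (𝟙 P1) := (show interMP C W (𝟙 P1) from by
          rw [hCW]; exact pBij_id _).2
        have hWp : W pMap := (h23 eMap pMap).2.1 hWe (by rw [comp_ep]; exact hWid)
        obtain ⟨E, l, r, hl, hr, hco⟩ := W_factor h23 hws2 pMap hWp
        have hli : interMP C W l := hl
        rw [hCW] at hli
        rw [hFW] at hr
        have : pInjStar pMap.{u} := by
          rw [← hco]; exact comp_istar_of_inj hli.1 hr
        exact pMap_not_istar this
      · -- (1,6) eliminated
        exfalso
        have hWm : W mMap := (show interMP F W mMap from by
          rw [hFW]; exact ⟨mMap_surj, mMap_istar⟩).2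
        have hWid : W (𝟙 P2) := (show interMP C W (𝟙 P2) from by
          rw [hCW]; exact pBij_id _).2
        have hWe : W e23 := (h23 e23 mMap).2.2 hWm (by rw [comp_em]; exact hWid)
        obtain ⟨E, l, r, hl, hr, hco⟩ := W_factor h23 hws2 e23 hWe
        have hli : interMP C W l := hl
        rw [hCW] at hli
        rw [hFW] at hr
        have : Function.Surjective e23.{u}.toFun := by
          rw [← hco]; exact comp_surj hli.2 hr.1
        exact e23_not_surj this
    -- Row 2 : (interMP C W, F) = (pAny, pBij)
    · rcases wfs_classify _ _ hws2 with ⟨hC, hFW⟩ | ⟨hC, hFW⟩ | ⟨hC, hFW⟩ | ⟨hC, hFW⟩ |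
        ⟨hC, hFW⟩ | ⟨hC, hFW⟩
      · -- (2,1) inclusion violated
        exfalso
        have hx : interMP C W pMap := by rw [hCW]; exact trivial
        have hcx := hx.1
        rw [hC] at hcx
        exact pMap_not_inj hcx.1
      · -- (2,2) diagonal : (pAny, pBij, pAny)
        have hW : W = pAny := W_eq_any h23 hws2 (fun f hf =>
          (show interMP C W f from by rw [hCW]; rw [hC] at hf; exact hf).2)
        exact Or.inr (Or.inl ⟨hC, hF, hW⟩)
      · -- (2,3) inclusion violated
        exfalso
        have hx : interMP C W pMap := by rw [hCW]; exact trivial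
        have hcx := hx.1
        rw [hC] at hcx
        exact pMap_not_inj hcx
      · -- (2,4) inclusion violated
        exfalso
        have hx : interMP C W eMap := by rw [hCW]; exact trivial
        have hcx := hx.1
        rw [hC] at hcx
        exact eMap_not_surj hcx
      · -- (2,5) inclusion violated
        exfalso
        have hx : interMP C W eMap := by rw [hCW]; exact trivial
        have hcx := hx.1
        rw [hC] at hcx
        exact eMap_not_surj hcx.1
      · -- (2,6) inclusion violated
        exfalso
        have hx : interMP C W mMap := by rw [hCW]; exact trivial
        have hcx := hx.1
        rw [hC] at hcx
        exact mMap_not_ine hcx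
    -- Row 3 : (interMP C W, F) = (pInj, pSurj)
    · rcases wfs_classify _ _ hws2 with ⟨hC, hFW⟩ | ⟨hC, hFW⟩ | ⟨hC, hFW⟩ | ⟨hC, hFW⟩ |
        ⟨hC, hFW⟩ | ⟨hC, hFW⟩
      · -- (3,1) inclusion violated
        exfalso
        have hx : interMP C W eMap := by rw [hCW]; exact eMap_inj
        have hcx := hx.1
        rw [hC] at hcx
        exact eMap_not_surj hcx.2
      · -- (3,2) eliminated
        exfalso
        have hWe : W eMap := (show interMP C W eMap from by rw [hCW]; exact eMap_inj).2
        have hWid : W (𝟙 P1) := (show interMP C W (𝟙 P1) from by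
          rw [hCW]; exact Function.injective_id).2
        have hWp : W pMap := (h23 eMap pMap).2.1 hWe (by rw [comp_ep]; exact hWid)
        obtain ⟨E, l, r, hl, hr, hco⟩ := W_factor h23 hws2 pMap hWp
        have hli : interMP C W l := hl
        rw [hCW] at hli
        rw [hFW] at hr
        have : Function.Injective pMap.{u}.toFun := by
          rw [← hco]; exact comp_inj hli hr.1
        exact pMap_not_inj this
      · -- (3,3) diagonal : (pInj, pSurj, pAny)
        have hW : W = pAny := W_eq_any h23 hws2 (fun f hf =>
          (show interMP C W f from by rw [hCW]; rw [hC] at hf; exact hf).2)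
        exact Or.inr (Or.inr (Or.inr (Or.inl ⟨hC, hF, hW⟩)))
      · -- (3,4) inclusion violated
        exfalso
        have hx : interMP C W eMap := by rw [hCW]; exact eMap_inj
        have hcx := hx.1
        rw [hC] at hcx
        exact eMap_not_surj hcx
      · -- (3,5) inclusion violated
        exfalso
        have hx : interMP C W eMap := by rw [hCW]; exact eMap_inj
        have hcx := hx.1
        rw [hC] at hcx
        exact eMap_not_surj hcx.1
      · -- (3,6) eliminated
        exfalso
        have hWe : W eMap := (show interMP C W eMap from by rw [hCW]; exact eMap_inj).2
        have hWid : W (𝟙 P1) := (show interMP C W (𝟙 P1) from by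
          rw [hCW]; exact Function.injective_id).2
        have hWp : W pMap := (h23 eMap pMap).2.1 hWe (by rw [comp_ep]; exact hWid)
        obtain ⟨E, l, r, hl, hr, hco⟩ := W_factor h23 hws2 pMap hWp
        have hli : interMP C W l := hl
        rw [hCW] at hli
        rw [hFW] at hr
        have : pInjStar pMap.{u} := by
          rw [← hco]; exact comp_istar_of_inj hli hr.2
        exact pMap_not_istar this
    -- Row 4 : (interMP C W, F) = (pSurj, pInj)
    · rcases wfs_classify _ _ hws2 with ⟨hC, hFW⟩ | ⟨hC, hFW⟩ | ⟨hC, hFW⟩ | ⟨hC, hFW⟩ |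
        ⟨hC, hFW⟩ | ⟨hC, hFW⟩
      · -- (4,1) inclusion violated
        exfalso
        have hx : interMP C W pMap := by rw [hCW]; exact pMap_surj
        have hcx := hx.1
        rw [hC] at hcx
        exact pMap_not_inj hcx.1
      · -- (4,2) eliminated
        exfalso
        have hWp : W pMap := (show interMP C W pMap from by rw [hCW]; exact pMap_surj).2
        have hWid : W (𝟙 P1) := (show interMP C W (𝟙 P1) from by
          rw [hCW]; exact Function.surjective_id).2
        have hWe : W eMap := (h23 eMap pMap).2.2 hWp (by rw [comp_ep]; exact hWid)
        obtain ⟨E, l, r, hl, hr, hco⟩ := W_factor h23 hws2 eMap hWe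
        have hli : interMP C W l := hl
        rw [hCW] at hli
        rw [hFW] at hr
        have : Function.Surjective eMap.{u}.toFun := by
          rw [← hco]; exact comp_surj hli hr.2
        exact eMap_not_surj this
      · -- (4,3) inclusion violated
        exfalso
        have hx : interMP C W pMap := by rw [hCW]; exact pMap_surj
        have hcx := hx.1
        rw [hC] at hcx
        exact pMap_not_inj hcx
      · -- (4,4) diagonal : (pSurj, pInj, pAny)
        have hW : W = pAny := W_eq_any h23 hws2 (fun f hf =>
          (show interMP C W f from by rw [hCW]; rw [hC] at hf; exact hf).2)
        exact Or.inr (Or.inr (Or.inr (Or.inr (Or.inl ⟨hC, hF, hW⟩))))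
      · -- (4,5) inclusion violated
        exfalso
        have hx : interMP C W mMap := by rw [hCW]; exact mMap_surj
        have hcx := hx.1
        rw [hC] at hcx
        exact mMap_not_ine hcx.2
      · -- (4,6) inclusion violated
        exfalso
        have hx : interMP C W mMap := by rw [hCW]; exact mMap_surj
        have hcx := hx.1
        rw [hC] at hcx
        exact mMap_not_ine hcx
    -- Row 5 : (interMP C W, F) = (pSurj ∧ pInjNeStar, pInjStar)
    · rcases wfs_classify _ _ hws2 with ⟨hC, hFW⟩ | ⟨hC, hFW⟩ | ⟨hC, hFW⟩ | ⟨hC, hFW⟩ |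
        ⟨hC, hFW⟩ | ⟨hC, hFW⟩
      · -- (5,1) inclusion violated
        exfalso
        have hx : interMP C W pMap := by rw [hCW]; exact ⟨pMap_surj, pMap_ine⟩
        have hcx := hx.1
        rw [hC] at hcx
        exact pMap_not_inj hcx.1
      · -- (5,2) eliminated
        exfalso
        have hWp : W pMap := (show interMP C W pMap from by
          rw [hCW]; exact ⟨pMap_surj, pMap_ine⟩).2
        have hWid : W (𝟙 P1) := (show interMP C W (𝟙 P1) from by
          rw [hCW]; exact ⟨Function.surjective_id, id_ine P1⟩).2
        have hWe : W eMap := (h23 eMap pMap).2.2 hWp (by rw [comp_ep]; exact hWid)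
        obtain ⟨E, l, r, hl, hr, hco⟩ := W_factor h23 hws2 eMap hWe
        have hli : interMP C W l := hl
        rw [hCW] at hli
        rw [hFW] at hr
        have : Function.Surjective eMap.{u}.toFun := by
          rw [← hco]; exact comp_surj hli.1 hr.2
        exact eMap_not_surj this
      · -- (5,3) inclusion violated
        exfalso
        have hx : interMP C W pMap := by rw [hCW]; exact ⟨pMap_surj, pMap_ine⟩
        have hcx := hx.1
        rw [hC] at hcx
        exact pMap_not_inj hcx
      · -- (5,4) eliminated
        exfalso
        have hWc : W c3 := (show interMP C W c3 from by
          rw [hCW]; exact ⟨c3_surj, c3_ine⟩).2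
        have hWm : W m33 := (h23 m33 c3).2.2 hWc (by rw [comp_mc]; exact hWc)
        obtain ⟨E, l, r, hl, hr, hco⟩ := W_factor h23 hws2 m33 hWm
        have hli : interMP C W l := hl
        rw [hCW] at hli
        rw [hFW] at hr
        have : pInjNeStar m33.{u} := by
          rw [← hco]; exact comp_ine_of_inj hli.2 hr
        exact m33_not_ine this
      · -- (5,5) diagonal : (pSurj ∧ pInjNeStar, pInjStar, pAny)
        have hW : W = pAny := W_eq_any h23 hws2 (fun f hf =>
          (show interMP C W f from by rw [hCW]; rw [hC] at hf; exact hf).2)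
        exact Or.inr (Or.inr (Or.inr (Or.inr (Or.inr (Or.inl ⟨hC, hF, hW⟩)))))
      · -- (5,6) eliminated
        exfalso
        have hWp : W pMap := (show interMP C W pMap from by
          rw [hCW]; exact ⟨pMap_surj, pMap_ine⟩).2
        have hWid : W (𝟙 P1) := (show interMP C W (𝟙 P1) from by
          rw [hCW]; exact ⟨Function.surjective_id, id_ine P1⟩).2
        have hWe : W eMap := (h23 eMap pMap).2.2 hWp (by rw [comp_ep]; exact hWid)
        obtain ⟨E, l, r, hl, hr, hco⟩ := W_factor h23 hws2 eMap hWe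
        have hli : interMP C W l := hl
        rw [hCW] at hli
        rw [hFW] at hr
        have : Function.Surjective eMap.{u}.toFun := by
          rw [← hco]; exact comp_surj hli.1 hr.1
        exact eMap_not_surj this
    -- Row 6 : (interMP C W, F) = (pInjNeStar, pSurj ∧ pInjStar)
    · rcases wfs_classify _ _ hws2 with ⟨hC, hFW⟩ | ⟨hC, hFW⟩ | ⟨hC, hFW⟩ | ⟨hC, hFW⟩ |
        ⟨hC, hFW⟩ | ⟨hC, hFW⟩
      · -- (6,1) inclusion violated
        exfalso
        have hx : interMP C W eMap := by rw [hCW]; exact eMap_ine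
        have hcx := hx.1
        rw [hC] at hcx
        exact eMap_not_surj hcx.2
      · -- (6,2) eliminated
        exfalso
        have hWc : W c3 := (show interMP C W c3 from by rw [hCW]; exact c3_ine).2
        have hWm : W m33 := (h23 m33 c3).2.2 hWc (by rw [comp_mc]; exact hWc)
        obtain ⟨E, l, r, hl, hr, hco⟩ := W_factor h23 hws2 m33 hWm
        have hli : interMP C W l := hl
        rw [hCW] at hli
        rw [hFW] at hr
        have : pInjNeStar m33.{u} := by
          rw [← hco]; exact comp_ine_of_inj hli hr.1
        exact m33_not_ine this
      · -- (6,3) inclusion violated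
        exfalso
        have hx : interMP C W pMap := by rw [hCW]; exact pMap_ine
        have hcx := hx.1
        rw [hC] at hcx
        exact pMap_not_inj hcx
      · -- (6,4) inclusion violated
        exfalso
        have hx : interMP C W eMap := by rw [hCW]; exact eMap_ine
        have hcx := hx.1
        rw [hC] at hcx
        exact eMap_not_surj hcx
      · -- (6,5) inclusion violated
        exfalso
        have hx : interMP C W eMap := by rw [hCW]; exact eMap_ine
        have hcx := hx.1
        rw [hC] at hcx
        exact eMap_not_surj hcx.1
      · -- (6,6) diagonal : (pInjNeStar, pSurj ∧ pInjStar, pAny)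
        have hW : W = pAny := W_eq_any h23 hws2 (fun f hf =>
          (show interMP C W f from by rw [hCW]; rw [hC] at hf; exact hf).2)
        exact Or.inr (Or.inr (Or.inr (Or.inr (Or.inr (Or.inr ⟨hC, hF, hW⟩)))))
  · rintro (⟨hC, hF, hW⟩ | ⟨hC, hF, hW⟩ | ⟨hC, hF, hW⟩ | ⟨hC, hF, hW⟩ | ⟨hC, hF, hW⟩ |
      ⟨hC, hF, hW⟩ | ⟨hC, hF, hW⟩) <;> subst hC <;> subst hF <;> subst hW
    · exact ms_bij
    · exact ms_any wfs_any_bij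
    · exact ms_any wfs_bij_any
    · exact ms_any wfs_inj_surj
    · exact ms_any wfs_surj_inj
    · exact ms_any wfs_sine_istar
    · exact ms_any wfs_ine_sistar
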